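/- If Q ~ Uniform(-1,1) and Q̃ = sign(Q) - Q, then the pair (Q, Q̃) has the same joint distribution as the swapped pair (Q̃, Q). -/

import Mathlib

open MeasureTheory
open scoped ENNReal

lemma measurable_real_sign : Measurable Real.sign := by
  unfold Real.sign
  exact Measurable.ite measurableSet_Iio measurable_const
    (Measurable.ite measurableSet_Ioi measurable_const measurable_const)

lemma knockoff_measurable : Measurable (fun q : ℝ => Real.sign q - q) :=
  measurable_real_sign.sub measurable_id

lemma disj01 : Disjoint (Set.Ioo (-1 : ℝ) 0) (Set.Ioo (0 : ℝ) 1) :=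
  Set.disjoint_left.mpr fun x hx hx' => absurd hx'.1 (not_lt.mpr hx.2.le)

lemma split01 : (Set.Ioo (-1 : ℝ) 1 : Set ℝ)
    =ᵐ[volume] ((Set.Ioo (-1 : ℝ) 0 ∪ Set.Ioo (0 : ℝ) 1 : Set ℝ)) := by
  apply MeasureTheory.ae_eq_set.mpr
  constructor
  · refine measure_mono_null ?_ (Real.volume_singleton (a := 0))
    intro x hx
    simp only [Set.mem_diff, Set.mem_Ioo, Set.mem_union, not_or] at hx
    obtain ⟨⟨h1, h2⟩, h3, h4⟩ := hx
    simp only [Set.mem_singleton_iff]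
    by_contra hne
    rcases lt_or_gt_of_ne hne with h | h
    · exact h3 ⟨h1, h⟩
    · exact h4 ⟨h, h2⟩
  · have hsub : (Set.Ioo (-1 : ℝ) 0 ∪ Set.Ioo (0 : ℝ) 1 : Set ℝ) ⊆ Set.Ioo (-1 : ℝ) 1 := by
      intro x hx
      rcases hx with h | h <;> simp only [Set.mem_Ioo] at h ⊢ <;>
        exact ⟨by linarith [h.1, h.2], by linarith [h.1, h.2]⟩
    rw [Set.diff_eq_empty.mpr hsub]
    exact measure_empty

lemma map_knockoff_restrict :
    Measure.map (fun q : ℝ => Real.sign q - q) (volume.restrict (Set.Ioo (-1 : ℝ) 1))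
      = volume.restrict (Set.Ioo (-1 : ℝ) 1) := by
  rw [Measure.restrict_congr_set split01,
    Measure.restrict_union disj01 measurableSet_Ioo,
    Measure.map_add _ _ knockoff_measurable]
  have hneg : Measure.map (fun q : ℝ => Real.sign q - q) (volume.restrict (Set.Ioo (-1 : ℝ) 0))
      = volume.restrict (Set.Ioo (-1 : ℝ) 0) := by
    have hae : (fun q : ℝ => Real.sign q - q)
        =ᵐ[volume.restrict (Set.Ioo (-1 : ℝ) 0)] (fun q : ℝ => -1 - q) := by
      filter_upwards [ae_restrict_mem measurableSet_Ioo] with q hq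
      rw [Real.sign_of_neg hq.2]
    rw [Measure.map_congr hae]
    have hmp : MeasurePreserving (fun q : ℝ => -1 - q) volume volume := by
      have h := (measurePreserving_add_left (volume : Measure ℝ) (-1)).comp
        (Measure.measurePreserving_neg (volume : Measure ℝ))
      have he : (fun q : ℝ => -1 - q) = (fun q : ℝ => -1 + q) ∘ Neg.neg := by
        funext q; simp [sub_eq_add_neg]
      rw [he]; exact h
    have hpre : (fun q : ℝ => -1 - q) ⁻¹' (Set.Ioo (-1 : ℝ) 0) = Set.Ioo (-1 : ℝ) 0 := by
      ext q; simp only [Set.mem_preimage, Set.mem_Ioo]; constructor <;> intro h <;>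
        exact ⟨by linarith [h.1, h.2], by linarith [h.1, h.2]⟩
    have := (hmp.restrict_preimage (measurableSet_Ioo : MeasurableSet (Set.Ioo (-1:ℝ) 0))).map_eq
    rwa [hpre] at this
  have hpos : Measure.map (fun q : ℝ => Real.sign q - q) (volume.restrict (Set.Ioo (0 : ℝ) 1))
      = volume.restrict (Set.Ioo (0 : ℝ) 1) := by
    have hae : (fun q : ℝ => Real.sign q - q)
        =ᵐ[volume.restrict (Set.Ioo (0 : ℝ) 1)] (fun q : ℝ => 1 - q) := by
      filter_upwards [ae_restrict_mem measurableSet_Ioo] with q hq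
      rw [Real.sign_of_pos hq.1]
    rw [Measure.map_congr hae]
    have hmp : MeasurePreserving (fun q : ℝ => 1 - q) volume volume := by
      have h := (measurePreserving_add_left (volume : Measure ℝ) (1)).comp
        (Measure.measurePreserving_neg (volume : Measure ℝ))
      have he : (fun q : ℝ => 1 - q) = (fun q : ℝ => 1 + q) ∘ Neg.neg := by
        funext q; simp [sub_eq_add_neg]
      rw [he]; exact h
    have hpre : (fun q : ℝ => 1 - q) ⁻¹' (Set.Ioo (0 : ℝ) 1) = Set.Ioo (0 : ℝ) 1 := by
      ext q; simp only [Set.mem_preimage, Set.mem_Ioo]; constructor <;> intro h <;>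
        exact ⟨by linarith [h.1, h.2], by linarith [h.1, h.2]⟩
    have := (hmp.restrict_preimage (measurableSet_Ioo : MeasurableSet (Set.Ioo (0:ℝ) 1))).map_eq
    rwa [hpre] at this
  rw [hneg, hpos, ← Measure.restrict_union disj01 measurableSet_Ioo,
    ← Measure.restrict_congr_set split01]

/-- If `Q ~ Uniform(-1,1)` and `Q̃ = sign(Q) - Q`, then `(Q, Q̃)` has the same joint
distribution as the swapped pair `(Q̃, Q)`. -/
theorem stmt_8 {Ω : Type*} [MeasurableSpace Ω] (μ : Measure Ω) [IsProbabilityMeasure μ]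
    (Q : Ω → ℝ) (hQ : Measurable Q)
    (hQUnif : Measure.map Q μ = (2 : ℝ≥0∞)⁻¹ • volume.restrict (Set.Ioo (-1 : ℝ) 1)) :
    Measure.map (fun ω => (Q ω, Real.sign (Q ω) - Q ω)) μ
      = Measure.map (fun ω => (Real.sign (Q ω) - Q ω, Q ω)) μ := by
  set ν : Measure ℝ := (2 : ℝ≥0∞)⁻¹ • volume.restrict (Set.Ioo (-1 : ℝ) 1) with hν
  have hfm : Measurable (fun q : ℝ => (q, Real.sign q - q)) :=
    measurable_id.prodMk knockoff_measurable
  have hgm : Measurable (fun q : ℝ => (Real.sign q - q, q)) :=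
    knockoff_measurable.prodMk measurable_id
  have hL : Measure.map (fun ω => (Q ω, Real.sign (Q ω) - Q ω)) μ
      = Measure.map (fun q : ℝ => (q, Real.sign q - q)) ν := by
    rw [← hQUnif, Measure.map_map hfm hQ]; rfl
  have hR : Measure.map (fun ω => (Real.sign (Q ω) - Q ω, Q ω)) μ
      = Measure.map (fun q : ℝ => (Real.sign q - q, q)) ν := by
    rw [← hQUnif, Measure.map_map hgm hQ]; rfl
  rw [hL, hR]
  -- ν-a.e., g = f ∘ h where h q = sign q - q
  have hν0 : ν ({(0 : ℝ)} : Set ℝ) = 0 := by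
    rw [hν]
    simp only [Measure.smul_apply, smul_eq_mul]
    rw [Measure.restrict_apply (measurableSet_singleton 0)]
    have : volume (({(0:ℝ)} : Set ℝ) ∩ Set.Ioo (-1:ℝ) 1) = 0 :=
      measure_mono_null Set.inter_subset_left Real.volume_singleton
    rw [this, mul_zero]
  have hνIoo : ∀ᵐ q ∂ν, q ∈ Set.Ioo (-1 : ℝ) 1 := by
    rw [hν]
    exact Measure.ae_smul_measure (ae_restrict_mem measurableSet_Ioo) _
  have hae : (fun q : ℝ => (Real.sign q - q, q))
      =ᵐ[ν] (fun q : ℝ => (q, Real.sign q - q)) ∘ (fun q : ℝ => Real.sign q - q) := by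
    have h0 : ∀ᵐ q ∂ν, q ≠ 0 := by
      rw [MeasureTheory.ae_iff]
      convert hν0 using 2
      ext q; simp
    filter_upwards [h0, hνIoo] with q hq0 hqI
    simp only [Function.comp_apply, Prod.mk.injEq]
    rcases hq0.lt_or_gt with h | h
    · rw [Real.sign_of_neg h, Real.sign_of_neg (by linarith [hqI.1] : (-1 : ℝ) - q < 0)]
      exact ⟨trivial, by ring⟩
    · rw [Real.sign_of_pos h, Real.sign_of_pos (by linarith [hqI.2] : (0:ℝ) < 1 - q)]
      exact ⟨trivial, by ring⟩
  rw [Measure.map_congr hae, ← Measure.map_map hfm knockoff_measurable]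
  congr 1
  rw [hν, Measure.map_smul, map_knockoff_restrict]
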